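/- Let G be a d-regular simple graph on n vertices whose adjacency-matrix eigenvalues λ₁ ≥ λ₂ ≥ ⋯ ≥ λₙ satisfy 0 ≤ λ₂ ≤ √(d/2). Then (d + n·λ₂)·(d³ + n·λ₂³) ≥ (d·n − d² − n·λ₂²)². -/

import Mathlib

lemma aux_trace_pow {m : Type*} [Fintype m] [DecidableEq m]
    (A : Matrix m m ℝ) (hA : A.IsHermitian) (k : ℕ) :
    (A ^ k).trace = ∑ i, hA.eigenvalues i ^ k := by
  set V : Matrix m m ℝ := (hA.eigenvectorUnitary : Matrix m m ℝ) with hV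
  have hV1 : V * star V = 1 := (Matrix.mem_unitaryGroup_iff).mp hA.eigenvectorUnitary.2
  have hV2 : star V * V = 1 := (Matrix.mem_unitaryGroup_iff').mp hA.eigenvectorUnitary.2
  set D : Matrix m m ℝ := Matrix.diagonal (RCLike.ofReal ∘ hA.eigenvalues) with hD
  have key : ∀ j : ℕ, A ^ j = V * D ^ j * star V := by
    intro j
    induction j with
    | zero => simp [hV1]
    | succ j ih =>
      calc A ^ (j+1) = (A ^ j) * A := pow_succ A j
      _ = (V * D ^ j * star V) * (V * D * star V) := by
        have hs := hA.spectral_theorem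
        simp only [Unitary.conjStarAlgAut_apply] at hs
        rw [ih]; congr 1
      _ = V * D ^ j * (star V * V) * D * star V := by noncomm_ring
      _ = V * D ^ (j+1) * star V := by rw [hV2, Matrix.mul_one, pow_succ, ← Matrix.mul_assoc]
  rw [key k, Matrix.trace_mul_cycle, hV2, Matrix.one_mul, hD,
    Matrix.diagonal_pow, Matrix.trace_diagonal]
  simp

open Matrix in
set_option maxHeartbeats 2000000 in
/-- Let `G` be a `d`-regular simple graph on `n ≥ 2` vertices whose
adjacency-matrix eigenvalues, listed in decreasing order as `μ`, satisfy
`0 ≤ λ₂ ≤ √(d/2)` where `λ₂ = μ 1`. Then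
`(d + n·λ₂)·(d³ + n·λ₂³) ≥ (d·n − d² − n·λ₂²)²`. -/
theorem stmt_8 (n d : ℕ) (hn : 2 ≤ n)
    (G : SimpleGraph (Fin n)) [DecidableRel G.Adj]
    (hreg : G.IsRegularOfDegree d)
    (hA : (G.adjMatrix ℝ).IsHermitian)
    (μ : Fin n → ℝ) (hμ : Antitone μ)
    (hperm : ∃ σ : Equiv.Perm (Fin n), μ = hA.eigenvalues ∘ σ)
    (hmu2_nonneg : 0 ≤ μ ⟨1, by omega⟩)
    (hmu2_le : μ ⟨1, by omega⟩ ≤ Real.sqrt ((d : ℝ) / 2)) :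
    ((d : ℝ) + n * μ ⟨1, by omega⟩) * ((d : ℝ) ^ 3 + n * μ ⟨1, by omega⟩ ^ 3)
      ≥ ((d : ℝ) * n - d ^ 2 - n * μ ⟨1, by omega⟩ ^ 2) ^ 2 := by
  obtain ⟨σ, hσ⟩ := hperm
  set A : Matrix (Fin n) (Fin n) ℝ := G.adjMatrix ℝ with hAdef
  have hn0 : 0 < n := by omega
  have hn1 : 1 < n := by omega
  set i0 : Fin n := ⟨0, hn0⟩ with hi0def
  set i1 : Fin n := ⟨1, hn1⟩ with hi1def
  set L : ℝ := μ i1 with hL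
  -- entries of A are nonnegative
  have hApos : ∀ i j : Fin n, 0 ≤ A i j := by
    intro i j
    rw [hAdef, SimpleGraph.adjMatrix_apply]
    split <;> norm_num
  -- row sums equal d
  have hrow : ∀ k : Fin n, ∑ j, A k j = (d : ℝ) := by
    intro k
    have h := SimpleGraph.adjMatrix_mulVec_const_apply_of_regular (α := ℝ) (a := 1)
      (v := k) hreg
    have h1 : (G.adjMatrix ℝ *ᵥ Function.const (Fin n) (1 : ℝ)) k = ∑ j, A k j * 1 := rfl
    rw [h1] at h
    simpa using h
  -- sums of powers of μ equal traces of powers of A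
  have hsum_pow : ∀ k : ℕ, ∑ i, μ i ^ k = (A ^ k).trace := by
    intro k
    rw [aux_trace_pow A hA k, hσ]
    exact Equiv.sum_comp σ (fun i => hA.eigenvalues i ^ k)
  have htr1 : ∑ i, μ i = 0 := by
    have h := hsum_pow 1
    have h0 : (A ^ 1).trace = 0 := by
      rw [pow_one, hAdef]; exact SimpleGraph.trace_adjMatrix (α := ℝ) G
    simpa using h.trans h0
  have htr2 : ∑ i, μ i ^ 2 = (n : ℝ) * d := by
    rw [hsum_pow 2, pow_two, Matrix.trace]
    have hdiag : ∀ i : Fin n, (A * A) i i = (d : ℝ) := by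
      intro i
      rw [hAdef, SimpleGraph.adjMatrix_mul_self_apply_self]
      exact_mod_cast congrArg (Nat.cast : ℕ → ℝ) (hreg i)
    simp [Matrix.diag, hdiag, Finset.card_univ]
  have htr3 : 0 ≤ ∑ i, μ i ^ 3 := by
    rw [hsum_pow 3]
    have h3 : A ^ 3 = A * A * A := by rw [pow_succ, pow_two]
    rw [h3, Matrix.trace]
    apply Finset.sum_nonneg
    intro i _
    rw [Matrix.diag, Matrix.mul_apply]
    apply Finset.sum_nonneg
    intro j _
    apply mul_nonneg _ (hApos j i)
    rw [Matrix.mul_apply]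
    exact Finset.sum_nonneg fun k _ => mul_nonneg (hApos i k) (hApos k j)
  -- every μ i is an eigenvalue, hence ≤ d
  have hub : ∀ i : Fin n, μ i ≤ (d : ℝ) := by
    intro i
    have hEig : Module.End.HasEigenvalue (Matrix.toLin' A) (μ i) := by
      rw [Module.End.hasEigenvalue_iff_mem_spectrum]
      rw [show Matrix.toLin' A = Matrix.toLinAlgEquiv' A from rfl,
        AlgEquiv.spectrum_eq Matrix.toLinAlgEquiv' A]
      rw [hσ]
      exact hA.eigenvalues_mem_spectrum_real (σ i)
    obtain ⟨k, hk⟩ := eigenvalue_mem_ball hEig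
    rw [Metric.mem_closedBall, Real.dist_eq] at hk
    have hkk : A k k = 0 := by rw [hAdef]; simp
    have hkk' : G.adjMatrix ℝ k k = 0 := by simp
    have hnorm : ∀ j ∈ Finset.univ.erase k, ‖A k j‖ = A k j := fun j _ =>
      Real.norm_of_nonneg (hApos k j)
    rw [Finset.sum_congr rfl hnorm, Finset.sum_erase_eq_sub (Finset.mem_univ k), hrow k] at hk
    simp only [hkk, hkk', sub_zero] at hk
    exact (abs_le.mp hk).2
  -- d is an eigenvalue, so μ i0 = d
  have hmu0 : μ i0 = (d : ℝ) := by
    have hmem : (d : ℝ) ∈ spectrum ℝ A := by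
      rw [← AlgEquiv.spectrum_eq Matrix.toLinAlgEquiv' A,
        show Matrix.toLinAlgEquiv' A = Matrix.toLin' A from rfl,
        ← Module.End.hasEigenvalue_iff_mem_spectrum]
      apply Module.End.hasEigenvalue_of_hasEigenvector (x := fun _ => (1 : ℝ))
      constructor
      · rw [Module.End.mem_eigenspace_iff, Matrix.toLin'_apply]
        funext v
        have h1 : (A *ᵥ (fun _ => (1 : ℝ))) v = (d : ℝ) * 1 := by
          rw [hAdef]
          exact SimpleGraph.adjMatrix_mulVec_const_apply_of_regular hreg
        rw [h1]
        simp
      · intro h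
        have := congrFun h i0
        norm_num at this
    rw [hA.spectrum_real_eq_range_eigenvalues] at hmem
    obtain ⟨i, hi⟩ := hmem
    have h1 : μ (σ.symm i) = (d : ℝ) := by rw [hσ]; simpa using hi
    have h2 : μ (σ.symm i) ≤ μ i0 := hμ (by simp [hi0def, Fin.le_def])
    exact le_antisymm (hub i0) (h1 ▸ h2)
  -- key quantities
  set s : Finset (Fin n) := Finset.univ.erase i0 with hs
  have hmem0 : i0 ∈ Finset.univ (α := Fin n) := Finset.mem_univ i0
  have hmu_le_L : ∀ j ∈ s, μ j ≤ L := by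
    intro j hj
    have hj0 : j ≠ i0 := (Finset.mem_erase.mp hj).1
    have hle : i1 ≤ j := by
      rw [Fin.le_def]
      have : (j : ℕ) ≠ 0 := fun h => hj0 (Fin.ext h)
      simp only [hi1def]
      omega
    exact hμ hle
  have hScard : (s.card : ℝ) = (n : ℝ) - 1 := by
    rw [hs, Finset.card_erase_of_mem hmem0, Finset.card_univ, Fintype.card_fin]
    have h1 : (1:ℕ) ≤ n := by omega
    push_cast [Nat.cast_sub h1]
    ring
  have hS1 : ∑ j ∈ s, μ j = -(d : ℝ) := by
    have h : ∑ j ∈ s, μ j = (∑ i, μ i) - μ i0 := Finset.sum_erase_eq_sub hmem0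
    rw [h, htr1, hmu0]; ring
  have hS2 : ∑ j ∈ s, μ j ^ 2 = (n : ℝ) * d - (d : ℝ) ^ 2 := by
    have h : ∑ j ∈ s, μ j ^ 2 = (∑ i, μ i ^ 2) - μ i0 ^ 2 := Finset.sum_erase_eq_sub hmem0
    rw [h, htr2, hmu0]
  have hS3 : -((d : ℝ) ^ 3) ≤ ∑ j ∈ s, μ j ^ 3 := by
    have h : ∑ j ∈ s, μ j ^ 3 = (∑ i, μ i ^ 3) - μ i0 ^ 3 := Finset.sum_erase_eq_sub hmem0
    rw [h, hmu0]
    linarith [htr3]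
  -- Cauchy-Schwarz
  have hCS : (∑ j ∈ s, (L - μ j) * (L + μ j)) ^ 2
      ≤ (∑ j ∈ s, (L - μ j)) * ∑ j ∈ s, (L - μ j) * (L + μ j) ^ 2 := by
    apply Finset.sum_sq_le_sum_mul_sum_of_sq_eq_mul
    · intro j hj; linarith [hmu_le_L j hj]
    · intro j hj; exact mul_nonneg (by linarith [hmu_le_L j hj]) (sq_nonneg _)
    · intro j hj; ring
  have hB : ∑ j ∈ s, (L - μ j) * (L + μ j) = ((n : ℝ) - 1) * L ^ 2 - ((n : ℝ) * d - d ^ 2) := by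
    have h : ∀ j ∈ s, (L - μ j) * (L + μ j) = L ^ 2 - μ j ^ 2 := fun j _ => by ring
    rw [Finset.sum_congr rfl h, Finset.sum_sub_distrib, Finset.sum_const, hS2, nsmul_eq_mul,
      hScard]
  have hT1 : ∑ j ∈ s, (L - μ j) = ((n : ℝ) - 1) * L + (d : ℝ) := by
    rw [Finset.sum_sub_distrib, Finset.sum_const, hS1, nsmul_eq_mul, hScard]; ring
  have hT1nonneg : 0 ≤ ∑ j ∈ s, (L - μ j) :=
    Finset.sum_nonneg fun j hj => by linarith [hmu_le_L j hj]
  have hT2nonneg : 0 ≤ ∑ j ∈ s, (L - μ j) * (L + μ j) ^ 2 :=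
    Finset.sum_nonneg fun j hj => mul_nonneg (by linarith [hmu_le_L j hj]) (sq_nonneg _)
  have hT2 : ∑ j ∈ s, (L - μ j) * (L + μ j) ^ 2
      = ((n : ℝ) - 1) * L ^ 3 - L ^ 2 * (d : ℝ) - L * ((n : ℝ) * d - d ^ 2)
        - ∑ j ∈ s, μ j ^ 3 := by
    have h : ∀ j ∈ s, (L - μ j) * (L + μ j) ^ 2
        = L ^ 3 + L ^ 2 * μ j - L * μ j ^ 2 - μ j ^ 3 := fun j _ => by ring
    rw [Finset.sum_congr rfl h]
    rw [Finset.sum_sub_distrib, Finset.sum_sub_distrib, Finset.sum_add_distrib,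
      Finset.sum_const, ← Finset.mul_sum, ← Finset.mul_sum, hS1, hS2, nsmul_eq_mul, hScard]
    ring
  -- scalar bounds
  have hd0 : (0 : ℝ) ≤ (d : ℝ) := Nat.cast_nonneg d
  have hN0 : (0 : ℝ) ≤ (n : ℝ) := Nat.cast_nonneg n
  have hdn : (d : ℝ) ≤ (n : ℝ) := by
    have h := G.degree_lt_card_verts i0
    rw [hreg i0, Fintype.card_fin] at h
    exact_mod_cast h.le
  have hL0 : 0 ≤ L := hmu2_nonneg
  have hL2 : L ^ 2 ≤ (d : ℝ) / 2 := by
    have h1 : L ^ 2 ≤ Real.sqrt ((d : ℝ) / 2) ^ 2 := by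
      apply pow_le_pow_left₀ hL0 hmu2_le
    rwa [Real.sq_sqrt (by positivity)] at h1
  have hT2le : ∑ j ∈ s, (L - μ j) * (L + μ j) ^ 2 ≤ (d : ℝ) ^ 3 + (n : ℝ) * L ^ 3 := by
    rw [hT2]
    have h2 : 0 ≤ L ^ 3 + (d : ℝ) * L ^ 2 + L * ((n : ℝ) * d - d ^ 2) := by
      have h3 : 0 ≤ (d : ℝ) * ((n : ℝ) - (d : ℝ)) := mul_nonneg hd0 (by linarith)
      nlinarith [pow_nonneg hL0 3, mul_nonneg hd0 (sq_nonneg L), mul_nonneg hL0 h3]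
    linarith [hS3, h2]
  have hT1le : ∑ j ∈ s, (L - μ j) ≤ (d : ℝ) + (n : ℝ) * L := by
    rw [hT1]; linarith [hL0]
  have hkey : (((n : ℝ) - 1) * L ^ 2 - ((n : ℝ) * d - d ^ 2)) ^ 2
      ≤ ((d : ℝ) + (n : ℝ) * L) * ((d : ℝ) ^ 3 + (n : ℝ) * L ^ 3) := by
    rw [← hB]
    calc (∑ j ∈ s, (L - μ j) * (L + μ j)) ^ 2
        ≤ (∑ j ∈ s, (L - μ j)) * ∑ j ∈ s, (L - μ j) * (L + μ j) ^ 2 := hCS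
      _ ≤ ((d : ℝ) + (n : ℝ) * L) * ((d : ℝ) ^ 3 + (n : ℝ) * L ^ 3) :=
        mul_le_mul hT1le hT2le hT2nonneg (by positivity)
  -- final case analysis
  rw [ge_iff_le]
  rcases le_or_gt 0 ((d : ℝ) * n - d ^ 2 - n * L ^ 2) with hcase | hcase
  · linarith [hkey, sq_nonneg (L ^ 2), mul_nonneg hcase (sq_nonneg L)]
  · have hnL2 : (n : ℝ) * L ^ 2 ≤ (n : ℝ) * ((d : ℝ) / 2) :=
      mul_le_mul_of_nonneg_left hL2 hN0
    have hb : 0 ≤ (d : ℝ) ^ 2 - (n : ℝ) * d / 2 := by nlinarith [hcase, hnL2]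
    have h1 : ((d : ℝ) * n - d ^ 2 - n * L ^ 2) ^ 2 ≤ ((d : ℝ) ^ 2 - (n : ℝ) * d / 2) ^ 2 := by
      apply sq_le_sq'
      · nlinarith [hnL2]
      · linarith [hcase, hb]
    have hbc : (d : ℝ) ^ 2 - (n : ℝ) * d / 2 ≤ (d : ℝ) ^ 2 := by nlinarith [mul_nonneg hN0 hd0]
    have h2 : ((d : ℝ) ^ 2 - (n : ℝ) * d / 2) ^ 2 ≤ ((d : ℝ) ^ 2) ^ 2 := by
      nlinarith [hb, hbc]
    have h3 : ((d : ℝ) ^ 2) ^ 2 ≤ ((d : ℝ) + n * L) * ((d : ℝ) ^ 3 + n * L ^ 3) := by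
      nlinarith [mul_nonneg (mul_nonneg hN0 hL0) (pow_nonneg hd0 3),
        mul_nonneg hd0 (mul_nonneg hN0 (pow_nonneg hL0 3)),
        mul_nonneg (mul_nonneg hN0 hL0) (mul_nonneg hN0 (pow_nonneg hL0 3)),
        mul_nonneg hN0 (mul_nonneg hN0 (mul_nonneg (mul_nonneg hL0 hL0) (mul_nonneg hL0 hL0)))]
    linarith
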